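/- Let A be a symmetric positive definite real matrix indexed by a finite type such that every entry of A^{-1} is strictly positive. Let h be an index with standard basis vector e_h and let c > 0 be a real number. Then A^{-1} - (A + c·e_h e_hᵀ)^{-1} = c·(A^{-1} e_h)(A^{-1} e_h)ᵀ / (1 + c·(A^{-1})_{h h}), and every entry of this matrix is strictly positive; in particular every entry of (A + c·e_h e_hᵀ)^{-1} is strictly smaller than the corresponding entry of A^{-1}. -/

import Mathlib

open Matrix

private lemma mul_vecMulVec' {n : Type*} [Fintype n] (M : Matrix n n ℝ) (x y : n → ℝ) :
    M * vecMulVec x y = vecMulVec (M *ᵥ x) y := by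
  ext i j
  simp [mul_apply, vecMulVec_apply, mulVec, dotProduct, Finset.sum_mul, mul_assoc]

private lemma vecMulVec_mul' {n : Type*} [Fintype n] (M : Matrix n n ℝ) (x y : n → ℝ) :
    vecMulVec x y * M = vecMulVec x (y ᵥ* M) := by
  ext i j
  simp [mul_apply, vecMulVec_apply, vecMul, dotProduct, Finset.mul_sum, mul_assoc]

/-- Sherman–Morrison for a diagonal rank-one update: if `A` is symmetric positive definite
with all entries of `A⁻¹` strictly positive, `h` is an index and `c > 0`, then
`A⁻¹ - (A + c·e_h e_hᵀ)⁻¹ = c·(A⁻¹e_h)(A⁻¹e_h)ᵀ / (1 + c·(A⁻¹)_{hh})`, every entry of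
this difference is strictly positive, and every entry of `(A + c·e_h e_hᵀ)⁻¹` is
strictly smaller than the corresponding entry of `A⁻¹`. -/
theorem inv_rank_one_update_entrywise {n : Type*} [Fintype n] [DecidableEq n]
    (A : Matrix n n ℝ) (hA : A.PosDef) (hpos : ∀ i j, 0 < A⁻¹ i j)
    (h : n) (c : ℝ) (hc : 0 < c) :
    A⁻¹ - (A + Matrix.single h h c)⁻¹ =
        (c / (1 + c * A⁻¹ h h)) •
          Matrix.vecMulVec (A⁻¹ *ᵥ Pi.single h 1) (A⁻¹ *ᵥ Pi.single h 1) ∧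
      (∀ i j, 0 < (A⁻¹ - (A + Matrix.single h h c)⁻¹) i j) ∧
      ∀ i j, (A + Matrix.single h h c)⁻¹ i j < A⁻¹ i j := by
  set e : n → ℝ := Pi.single h 1 with he
  set u : n → ℝ := A⁻¹ *ᵥ e with hu
  have hdet : IsUnit A.det := isUnit_iff_ne_zero.mpr (ne_of_gt hA.det_pos)
  have hAinv : A * A⁻¹ = 1 := Matrix.mul_nonsing_inv A hdet
  have hui : ∀ i, u i = A⁻¹ i h := by
    intro i; simp [hu, he, mulVec_single]
  have hd : 0 < A⁻¹ h h := hpos h h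
  have hden : 0 < 1 + c * A⁻¹ h h := by positivity
  obtain ⟨s, hs⟩ : ∃ s, s = c / (1 + c * A⁻¹ h h) := ⟨_, rfl⟩
  have hs0 : 0 < s := hs ▸ div_pos hc hden
  -- A⁻¹ is symmetric
  have hsym : A⁻¹ h = u := by
    funext j
    have := (hA.isHermitian.inv).apply j h
    simp only [RCLike.star_def, conj_trivial] at this
    rw [hui j, this]
  have hE : Matrix.single h h c = c • vecMulVec e e := by
    rw [he, ← single_eq_single_vecMulVec_single, smul_single, smul_eq_mul, mul_one]
  have hAu : A *ᵥ u = e := by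
    rw [hu, mulVec_mulVec, hAinv, one_mulVec]
  have hevA : e ᵥ* A⁻¹ = u := by
    rw [he, single_one_vecMul, Matrix.row, hsym]
  have hevU : e ᵥ* vecMulVec u u = A⁻¹ h h • u := by
    funext j
    simp [he, vecMul, dotProduct, vecMulVec_apply, Pi.single_apply, Finset.mul_sum,
      ite_mul, hui h, mul_comm, mul_assoc, mul_left_comm]
  have key : (A + Matrix.single h h c) * (A⁻¹ - s • vecMulVec u u) = 1 := by
    rw [hE]
    rw [Matrix.add_mul, Matrix.mul_sub, Matrix.mul_sub, Matrix.mul_smul, Matrix.mul_smul,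
      Matrix.smul_mul, Matrix.smul_mul, hAinv, mul_vecMulVec', hAu,
      vecMulVec_mul', vecMulVec_mul', hevA, hevU]
    have h2 : vecMulVec e (A⁻¹ h h • u) = A⁻¹ h h • vecMulVec e u := by
      ext i j; simp [vecMulVec_apply, mul_comm, mul_left_comm, mul_assoc]
    rw [h2, smul_smul, smul_smul]
    have h1 : s * (1 + c * A⁻¹ h h) = c := by
      rw [hs]; exact div_mul_cancel₀ c (ne_of_gt hden)
    have hcoeff : c - s * c * A⁻¹ h h = s := by linear_combination -h1
    rw [← sub_smul, hcoeff]
    abel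
  have hBinv : (A + Matrix.single h h c)⁻¹ = A⁻¹ - s • vecMulVec u u :=
    Matrix.inv_eq_right_inv key
  have hdiff : A⁻¹ - (A + Matrix.single h h c)⁻¹ = s • vecMulVec u u := by
    rw [hBinv]; abel
  rw [← hs]
  refine ⟨hdiff, ?_, ?_⟩
  · intro i j
    rw [hdiff]
    simp only [Matrix.smul_apply, vecMulVec_apply, smul_eq_mul]
    have := hpos i h; have := hpos j h
    rw [hui, hui]
    positivity
  · intro i j
    have hp : 0 < (A⁻¹ - (A + Matrix.single h h c)⁻¹) i j := by
      rw [hdiff]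
      simp only [Matrix.smul_apply, vecMulVec_apply, smul_eq_mul]
      have := hpos i h; have := hpos j h
      rw [hui, hui]
      positivity
    simpa [Matrix.sub_apply, sub_pos] using hp
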